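/- arXiv:2207.05416 — 2 statements merged into one kernel-verified Lean document; each statement's English description precedes it below -/
import Mathlib

section
/- Let n ≥ 2, let ♢ be a symmetrization on 𝒦ⁿ belonging to the family ℱ, let H be a proper nonzero linear subspace of ℝⁿ and let K ∈ 𝒦ⁿ. Then W(♢_H K) ≤ W(K), where W denotes the mean width. -/
open Filter Topology Metric Set Pointwise MeasureTheory

noncomputable section

abbrev Euc (n : ℕ) := EuclideanSpace ℝ (Fin n)

def IsConvexBody {n : ℕ} (K : Set (Euc n)) : Prop :=
  K.Nonempty ∧ IsCompact K ∧ Convex ℝ K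

def reflMap {n : ℕ} (H : Submodule ℝ (Euc n)) : Euc n → Euc n :=
  (Submodule.reflection H : Euc n ≃ₗᵢ[ℝ] Euc n)

structure IsInF {n : ℕ} (D : Submodule ℝ (Euc n) → Set (Euc n) → Set (Euc n)) : Prop where
  body : ∀ ⦃H : Submodule ℝ (Euc n)⦄, H ≠ ⊥ → H ≠ ⊤ → ∀ ⦃K⦄, IsConvexBody K →
    IsConvexBody (D H K)
  symmetric : ∀ ⦃H : Submodule ℝ (Euc n)⦄, H ≠ ⊥ → H ≠ ⊤ → ∀ ⦃K⦄, IsConvexBody K →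
    reflMap H '' D H K = D H K
  mono : ∀ ⦃H : Submodule ℝ (Euc n)⦄, H ≠ ⊥ → H ≠ ⊤ → ∀ ⦃K L⦄, IsConvexBody K →
    IsConvexBody L → K ⊆ L → D H K ⊆ D H L
  transInv : ∀ ⦃H : Submodule ℝ (Euc n)⦄, H ≠ ⊥ → H ≠ ⊤ → ∀ ⦃K⦄, IsConvexBody K →
    reflMap H '' K = K → ∀ x ∈ Hᗮ, D H (K + {x}) = K
  inv : ∀ ⦃H : Submodule ℝ (Euc n)⦄, H ≠ ⊥ → H ≠ ⊤ → ∀ ⦃K⦄, IsConvexBody K →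
    reflMap H '' K = K → D H K = K

/-- The support function of `K`. -/
def suppFn {n : ℕ} (K : Set (Euc n)) (ν : Euc n) : ℝ :=
  sSup ((fun y => (inner ℝ ν y : ℝ)) '' K)

/-- The mean width of `K`: `(1/ω_n) ∫_{S^{n-1}} (h_K(ν) + h_K(-ν)) dν`, where the surface
measure on the unit sphere is the `(n-1)`-dimensional Hausdorff measure and `ω_n` is its
total mass. -/
def meanWidth {n : ℕ} (K : Set (Euc n)) : ℝ :=
  ((μH[(n : ℝ) - 1] (sphere (0 : Euc n) 1)).toReal)⁻¹ *
    ∫ ν in sphere (0 : Euc n) 1, (suppFn K ν + suppFn K (-ν)) ∂(μH[(n : ℝ) - 1])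

section Aux

variable {n : ℕ}

lemma suppFn_le {K : Set (Euc n)} {ν : Euc n} {m : ℝ} (hne : K.Nonempty)
    (h : ∀ y ∈ K, (inner ℝ ν y : ℝ) ≤ m) : suppFn K ν ≤ m :=
  csSup_le (hne.image _) (by rintro _ ⟨y, hy, rfl⟩; exact h y hy)

lemma le_suppFn {K : Set (Euc n)} {ν : Euc n} (hc : IsCompact K) {y : Euc n} (hy : y ∈ K) :
    (inner ℝ ν y : ℝ) ≤ suppFn K ν :=
  le_csSup ((hc.image (continuous_const.inner continuous_id)).bddAbove) (mem_image_of_mem _ hy)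

lemma suppFn_continuous {K : Set (Euc n)} (hne : K.Nonempty) (hc : IsCompact K) :
    Continuous (suppFn K) := by
  obtain ⟨M, hM⟩ := isBounded_iff_forall_norm_le.1 hc.isBounded
  have hM0 : 0 ≤ M := le_trans (norm_nonneg _) (hM _ hne.some_mem)
  have key : ∀ ν₁ ν₂ : Euc n, suppFn K ν₁ - suppFn K ν₂ ≤ M * ‖ν₁ - ν₂‖ := by
    intro ν₁ ν₂
    rw [sub_le_iff_le_add, add_comm]
    refine suppFn_le hne fun y hy => ?_
    have h1 : (inner ℝ ν₁ y : ℝ) = inner ℝ ν₂ y + inner ℝ (ν₁ - ν₂) y := by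
      rw [← inner_add_left, add_sub_cancel]
    rw [h1]
    have h2 : (inner ℝ (ν₁ - ν₂) y : ℝ) ≤ ‖ν₁ - ν₂‖ * ‖y‖ := real_inner_le_norm _ _
    have h3 : ‖ν₁ - ν₂‖ * ‖y‖ ≤ M * ‖ν₁ - ν₂‖ := by
      rw [mul_comm M]
      exact mul_le_mul_of_nonneg_left (hM y hy) (norm_nonneg _)
    have h4 := le_suppFn (ν := ν₂) hc hy
    linarith
  have hlip : LipschitzWith M.toNNReal (suppFn K) := by
    refine LipschitzWith.of_dist_le_mul fun ν₁ ν₂ => ?_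
    rw [Real.dist_eq, dist_eq_norm, Real.coe_toNNReal M hM0, abs_sub_le_iff]
    exact ⟨key ν₁ ν₂, by rw [norm_sub_rev]; exact key ν₂ ν₁⟩
  exact hlip.continuous

variable {D : Submodule ℝ (Euc n) → Set (Euc n) → Set (Euc n)}

lemma keyIneq (hD : IsInF D) {H : Submodule ℝ (Euc n)} (hb : H ≠ ⊥) (ht : H ≠ ⊤)
    {K : Set (Euc n)} (hK : IsConvexBody K) {x : Euc n} (hx : x ∈ Hᗮ) (ν : Euc n) :
    suppFn (D H K) ν ≤
      max (suppFn K ν - (inner ℝ ν x : ℝ)) (suppFn K (reflMap H ν) + (inner ℝ ν x : ℝ)) := by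
  set e := (Submodule.reflection H : Euc n ≃ₗᵢ[ℝ] Euc n) with he
  have hre : reflMap H = ⇑e := rfl
  have hadj : ∀ a b : Euc n, (inner ℝ a (e b) : ℝ) = inner ℝ (e a) b := fun a b =>
    calc (inner ℝ a (e b) : ℝ) = inner ℝ (e a) (e (e b)) := (e.inner_map_map a (e b)).symm
      _ = inner ℝ (e a) b := by rw [show e (e b) = b from Submodule.reflection_reflection H b]
  set s : Set (Euc n) := ((fun y => y - x) '' K) ∪ (⇑e '' ((fun y => y - x) '' K)) with hs
  have hKtc : IsCompact ((fun y : Euc n => y - x) '' K) :=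
    hK.2.1.image (continuous_id.sub continuous_const)
  have hscomp : IsCompact s := hKtc.union (hKtc.image e.continuous)
  set C := closure (convexHull ℝ s) with hC
  have hCc : IsCompact C := (isBounded_convexHull.2 hscomp.isBounded).isCompact_closure
  have hCconv : Convex ℝ C := (convex_convexHull ℝ s).closure
  have hsC : s ⊆ C := (subset_convexHull ℝ s).trans subset_closure
  have hCne : C.Nonempty := ⟨hK.1.some - x, hsC (Or.inl ⟨_, hK.1.some_mem, rfl⟩)⟩
  have hCbody : IsConvexBody C := ⟨hCne, hCc, hCconv⟩
  have hRs : ⇑e '' s = s := by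
    have h1 : ⇑e ∘ ⇑e = id := funext fun z => Submodule.reflection_reflection H z
    have h2 : ⇑e '' (⇑e '' ((fun y : Euc n => y - x) '' K)) = (fun y : Euc n => y - x) '' K := by
      rw [← image_comp, h1, image_id]
    rw [hs, image_union, h2]
    exact union_comm _ _
  have himg : ∀ A : Set (Euc n), ⇑e '' closure A = closure (⇑e '' A) := fun A =>
    e.toHomeomorph.image_closure A
  have hRC : reflMap H '' C = C := by
    rw [hre, hC, himg]
    congr 1
    rw [IsLinearMap.image_convexHull ⟨e.map_add, e.map_smul⟩, hRs]
  have hsum : IsConvexBody (C + {x}) :=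
    ⟨hCne.add (singleton_nonempty x),
      by rw [add_singleton]; exact hCc.image (continuous_id.add continuous_const),
      hCconv.add (convex_singleton x)⟩
  have hsub : K ⊆ C + {x} := by
    intro y hy
    rw [add_singleton]
    exact ⟨y - x, hsC (Or.inl ⟨y, hy, rfl⟩), sub_add_cancel y x⟩
  have hDsub : D H K ⊆ C := by
    have h1 := hD.mono hb ht hK hsum hsub
    rwa [hD.transInv hb ht hCbody hRC x hx] at h1
  set m := max (suppFn K ν - (inner ℝ ν x : ℝ)) (suppFn K (reflMap H ν) + (inner ℝ ν x : ℝ)) with hm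
  have hSconv : Convex ℝ {y : Euc n | (inner ℝ ν y : ℝ) ≤ m} := by
    refine convex_halfSpace_le ⟨fun a b => inner_add_right .., fun c y => ?_⟩ m
    rw [smul_eq_mul]; exact real_inner_smul_right ..
  have hSclosed : IsClosed {y : Euc n | (inner ℝ ν y : ℝ) ≤ m} :=
    isClosed_le (continuous_const.inner continuous_id) continuous_const
  have hs_sub : s ⊆ {y : Euc n | (inner ℝ ν y : ℝ) ≤ m} := by
    rintro z (⟨y, hy, rfl⟩ | ⟨_, ⟨y, hy, rfl⟩, rfl⟩)
    · have h1 : (inner ℝ ν (y - x) : ℝ) = inner ℝ ν y - inner ℝ ν x := inner_sub_right ..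
      have h2 := le_suppFn (ν := ν) hK.2.1 hy
      have h3 : suppFn K ν - (inner ℝ ν x : ℝ) ≤ m := le_max_left _ _
      simp only [mem_setOf_eq, h1]; linarith
    · have hex : e x = -x := Submodule.reflection_mem_subspace_orthogonalComplement_eq_neg hx
      have h1 : (inner ℝ ν (e (y - x)) : ℝ) = inner ℝ (e ν) y + inner ℝ ν x := by
        rw [hadj, inner_sub_right]
        have h2 : (inner ℝ (e ν) x : ℝ) = - inner ℝ ν x := by
          rw [← hadj, hex, inner_neg_right]
        rw [h2]; ring
      have h2 := le_suppFn (ν := e ν) hK.2.1 hy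
      have h3 : suppFn K (reflMap H ν) + (inner ℝ ν x : ℝ) ≤ m := le_max_right _ _
      rw [hre] at h3
      simp only [mem_setOf_eq, h1]; linarith
  have hC_sub : C ⊆ {y : Euc n | (inner ℝ ν y : ℝ) ≤ m} :=
    closure_minimal (convexHull_min hs_sub hSconv) hSclosed
  exact suppFn_le (hD.body hb ht hK).1 fun y hy => hC_sub (hDsub hy)

lemma keyIneq2 (hD : IsInF D) {H : Submodule ℝ (Euc n)} (hb : H ≠ ⊥) (ht : H ≠ ⊤)
    {K : Set (Euc n)} (hK : IsConvexBody K) (ν : Euc n) :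
    suppFn (D H K) ν ≤ (suppFn K ν + suppFn K (reflMap H ν)) / 2 := by
  by_cases hνH : ν ∈ H
  · have hRν : reflMap H ν = ν := Submodule.reflection_mem_subspace_eq_self hνH
    have h := keyIneq hD hb ht hK (Submodule.zero_mem Hᗮ) ν
    rw [hRν] at h ⊢
    rw [add_self_div_two]
    simp only [inner_zero_right, sub_zero, add_zero, max_self] at h
    exact h
  · set u : Euc n := (Hᗮ.orthogonalProjectionOnto ν : Euc n) with hu
    have hu_mem : u ∈ Hᗮ := (Hᗮ.orthogonalProjectionOnto ν).2
    have hu_ne : u ≠ 0 := by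
      intro h0
      apply hνH
      have h1 : ν - u ∈ Hᗮᗮ := Submodule.sub_starProjection_mem_orthogonal (K := Hᗮ) ν
      rw [h0, sub_zero, Submodule.orthogonal_orthogonal] at h1
      exact h1
    set t := (suppFn K ν - suppFn K (reflMap H ν)) / 2 with htdef
    set x := (t / ‖u‖ ^ 2) • u with hxdef
    have hx : x ∈ Hᗮ := Submodule.smul_mem _ _ hu_mem
    have hinner : (inner ℝ ν x : ℝ) = t := by
      have h2 : (inner ℝ (ν - u) u : ℝ) = 0 := Submodule.starProjection_inner_eq_zero ν u hu_mem
      rw [inner_sub_left] at h2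
      have h1 : (inner ℝ ν u : ℝ) = ‖u‖ ^ 2 := by
        rw [← real_inner_self_eq_norm_sq]; linarith
      rw [hxdef, real_inner_smul_right, h1]
      exact div_mul_cancel₀ t (pow_ne_zero 2 (norm_ne_zero_iff.2 hu_ne))
    have h := keyIneq hD hb ht hK hx ν
    rw [hinner] at h
    have h1 : suppFn K ν - t = (suppFn K ν + suppFn K (reflMap H ν)) / 2 := by
      rw [htdef]; ring
    have h2 : suppFn K (reflMap H ν) + t = (suppFn K ν + suppFn K (reflMap H ν)) / 2 := by
      rw [htdef]; ring
    rwa [h1, h2, max_self] at h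

lemma cont_integrableOn {φ : Euc n → ℝ} (hφ : Continuous φ)
    (hfin : (μH[(n : ℝ) - 1] : Measure (Euc n)) (sphere (0 : Euc n) 1) ≠ ⊤) :
    IntegrableOn φ (sphere (0 : Euc n) 1) (μH[(n : ℝ) - 1]) := by
  obtain ⟨Cb, hCb⟩ := (isCompact_sphere (0 : Euc n) 1).exists_bound_of_continuousOn hφ.continuousOn
  haveI : IsFiniteMeasure ((μH[(n : ℝ) - 1] : Measure (Euc n)).restrict (sphere (0 : Euc n) 1)) :=
    ⟨by rw [Measure.restrict_apply_univ]; exact lt_top_iff_ne_top.2 hfin⟩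
  refine ⟨hφ.aestronglyMeasurable, HasFiniteIntegral.of_bounded (C := Cb) ?_⟩
  filter_upwards [ae_restrict_mem isClosed_sphere.measurableSet] with y hy using hCb y hy

end Aux

/-- Any symmetrization in the family `ℱ` does not increase the mean width of a convex body. -/
theorem stmt7 {n : ℕ} (hn : 2 ≤ n)
    (D : Submodule ℝ (Euc n) → Set (Euc n) → Set (Euc n)) (hD : IsInF D)
    (H : Submodule ℝ (Euc n)) (hb : H ≠ ⊥) (ht : H ≠ ⊤)
    (K : Set (Euc n)) (hK : IsConvexBody K) :
    meanWidth (D H K) ≤ meanWidth K := by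
  by_cases hc : ((μH[(n : ℝ) - 1] : Measure (Euc n)) (sphere (0 : Euc n) 1)).toReal = 0
  · simp [meanWidth, hc]
  · have hfin : (μH[(n : ℝ) - 1] : Measure (Euc n)) (sphere (0 : Euc n) 1) ≠ ⊤ := by
      intro h; exact hc (by rw [h]; simp)
    have hDK := hD.body hb ht hK
    have hcontK : Continuous (suppFn K) := suppFn_continuous hK.1 hK.2.1
    have hcontD : Continuous (suppFn (D H K)) := suppFn_continuous hDK.1 hDK.2.1
    set e := (Submodule.reflection H : Euc n ≃ₗᵢ[ℝ] Euc n) with he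
    set f : Euc n → ℝ := fun ν => suppFn K ν + suppFn K (-ν) with hf
    set g : Euc n → ℝ := fun ν => suppFn (D H K) ν + suppFn (D H K) (-ν) with hg
    have hcf : Continuous f := hcontK.add (hcontK.comp continuous_neg)
    have hcg : Continuous g := hcontD.add (hcontD.comp continuous_neg)
    have hcfe : Continuous (fun ν => f (e ν)) := hcf.comp e.continuous
    have hif : IntegrableOn f (sphere (0 : Euc n) 1) (μH[(n : ℝ) - 1]) := cont_integrableOn hcf hfin
    have hig : IntegrableOn g (sphere (0 : Euc n) 1) (μH[(n : ℝ) - 1]) := cont_integrableOn hcg hfin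
    have hife : IntegrableOn (fun ν => f (e ν)) (sphere (0 : Euc n) 1) (μH[(n : ℝ) - 1]) :=
      cont_integrableOn hcfe hfin
    have hm : Integrable (fun ν => (f ν + f (e ν)) / 2)
        ((μH[(n : ℝ) - 1] : Measure (Euc n)).restrict (sphere (0 : Euc n) 1)) :=
      (hif.add hife).div_const 2
    have hle : g ≤ fun ν => (f ν + f (e ν)) / 2 := by
      intro ν
      have h1 := keyIneq2 hD hb ht hK ν
      have h2 := keyIneq2 hD hb ht hK (-ν)
      have h3 : reflMap H (-ν) = - reflMap H ν := map_neg e ν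
      rw [h3] at h2
      have h4 : reflMap H ν = e ν := rfl
      rw [h4] at h1 h2
      simp only [hg, hf]
      linarith
    have hint_le : (∫ ν in sphere (0 : Euc n) 1, g ν ∂(μH[(n : ℝ) - 1])) ≤
        ∫ ν in sphere (0 : Euc n) 1, (f ν + f (e ν)) / 2 ∂(μH[(n : ℝ) - 1]) :=
      integral_mono hig hm hle
    have hpre : ⇑e ⁻¹' (sphere (0 : Euc n) 1) = sphere (0 : Euc n) 1 := by
      ext y
      simp [mem_sphere_zero_iff_norm, e.norm_map]
    have hmp : MeasurePreserving e
        ((μH[(n : ℝ) - 1] : Measure (Euc n)).restrict (sphere (0 : Euc n) 1))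
        ((μH[(n : ℝ) - 1] : Measure (Euc n)).restrict (sphere (0 : Euc n) 1)) := by
      have h1 := (e.toIsometryEquiv.measurePreserving_hausdorffMeasure ((n : ℝ) - 1)).restrict_preimage
        (s := sphere (0 : Euc n) 1) isClosed_sphere.measurableSet
      rw [show ⇑e.toIsometryEquiv = ⇑e from rfl, hpre] at h1
      exact h1
    have hcov : (∫ ν in sphere (0 : Euc n) 1, f (e ν) ∂(μH[(n : ℝ) - 1])) =
        ∫ ν in sphere (0 : Euc n) 1, f ν ∂(μH[(n : ℝ) - 1]) :=
      hmp.integral_comp e.toHomeomorph.measurableEmbedding f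
    have heq : (∫ ν in sphere (0 : Euc n) 1, (f ν + f (e ν)) / 2 ∂(μH[(n : ℝ) - 1])) =
        ∫ ν in sphere (0 : Euc n) 1, f ν ∂(μH[(n : ℝ) - 1]) := by
      rw [integral_div, integral_add hif hife, hcov, add_self_div_two]
    unfold meanWidth
    refine mul_le_mul_of_nonneg_left ?_ (inv_nonneg.2 ENNReal.toReal_nonneg)
    calc (∫ ν in sphere (0 : Euc n) 1, (suppFn (D H K) ν + suppFn (D H K) (-ν)) ∂(μH[(n : ℝ) - 1]))
        = ∫ ν in sphere (0 : Euc n) 1, g ν ∂(μH[(n : ℝ) - 1]) := rfl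
      _ ≤ ∫ ν in sphere (0 : Euc n) 1, (f ν + f (e ν)) / 2 ∂(μH[(n : ℝ) - 1]) := hint_le
      _ = ∫ ν in sphere (0 : Euc n) 1, f ν ∂(μH[(n : ℝ) - 1]) := heq
      _ = _ := rfl
end
end

section
/- Let ♢ be a symmetrization on 𝒦² belonging to the family ℱ (in particular ♢ may be the Minkowski symmetrization). Then there exist a sequence (U_m)_{m≥1} of lines through the origin in ℝ² whose unit direction vectors are dense in S¹, and a convex body K ∈ 𝒦² with nonempty interior, such that the sequence K_m := (♢_{U_m} ∘ ⋯ ∘ ♢_{U_1})(K) does not converge in the Hausdorff metric. -/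
open Filter Topology Metric Set Pointwise MeasureTheory

noncomputable section

/-- `iterSeq T k K j = T_{k+j} ∘ ⋯ ∘ T_k` applied to `K`. -/
def iterSeq {n : ℕ} (T : ℕ → Set (Euc n) → Set (Euc n)) (k : ℕ) (K : Set (Euc n)) :
    ℕ → Set (Euc n)
  | 0 => T k K
  | j + 1 => T (k + j + 1) (iterSeq T k K j)

-- ===== auxiliary development =====
namespace Stmt18Aux

open Real Finset Filter

/-! ### Angles and radii -/

def eps (i : ℕ) : ℝ := 1 / (2 * (i + 1))
def th (m : ℕ) : ℝ := ∑ i ∈ Finset.range m, eps i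
def rr (m : ℕ) : ℝ := ∏ i ∈ Finset.range m, Real.cos (eps i)

lemma eps_pos (i : ℕ) : 0 < eps i := by unfold eps; positivity

lemma th_succ (m : ℕ) : th (m+1) = th m + eps m := Finset.sum_range_succ _ _
lemma rr_succ (m : ℕ) : rr (m+1) = rr m * Real.cos (eps m) := Finset.prod_range_succ _ _

lemma th_mono : Monotone th :=
  monotone_nat_of_le_succ fun m => by rw [th_succ]; linarith [eps_pos m]

lemma th_tendsto : Tendsto th atTop atTop := by
  have h := Real.tendsto_sum_range_one_div_nat_succ_atTop
  have h2 : Tendsto (fun n => (1/2 : ℝ) * ∑ i ∈ Finset.range n, (1 / (i + 1) : ℝ)) atTop atTop :=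
    h.const_mul_atTop (by norm_num)
  refine h2.congr (fun n => ?_)
  rw [Finset.mul_sum]
  refine Finset.sum_congr rfl fun i _ => ?_
  unfold eps
  field_simp

lemma sum_sq_le (m : ℕ) : ∑ i ∈ Finset.range m, (1 : ℝ) / (i+1)^2 ≤ 2 - 2/((m:ℝ)+1) := by
  induction m with
  | zero => norm_num
  | succ n ih =>
    rw [Finset.sum_range_succ]
    have h : (1:ℝ)/((n:ℝ)+1)^2 + 2/((n:ℝ)+1+1) ≤ 2/((n:ℝ)+1) := by
      rw [div_add_div _ _ (by positivity) (by positivity),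
        div_le_div_iff₀ (by positivity) (by positivity)]
      nlinarith [sq_nonneg ((n:ℝ)+1)]
    push_cast
    push_cast at ih
    linarith

lemma prod_one_sub_le (a : ℕ → ℝ) (ha : ∀ i, 0 ≤ a i) (ha1 : ∀ i, a i ≤ 1) (m : ℕ) :
    1 - ∑ i ∈ Finset.range m, a i ≤ ∏ i ∈ Finset.range m, (1 - a i) := by
  induction m with
  | zero => norm_num
  | succ n ih =>
    rw [Finset.sum_range_succ, Finset.prod_range_succ]
    have hp : (0:ℝ) ≤ ∏ i ∈ Finset.range n, (1 - a i) :=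
      Finset.prod_nonneg fun i _ => by linarith [ha1 i]
    have h1 : ∏ i ∈ Finset.range n, (1 - a i) ≤ 1 := by
      apply Finset.prod_le_one (fun i _ => by linarith [ha1 i]) (fun i _ => by linarith [ha i])
    nlinarith [ha n, ha1 n]

lemma cos_eps_ge (i : ℕ) : 1 - 1/(8*((i:ℝ)+1)^2) ≤ Real.cos (eps i) := by
  have h := Real.one_sub_sq_div_two_le_cos (x := eps i)
  have he : eps i ^ 2 / 2 = 1/(8*((i:ℝ)+1)^2) := by unfold eps; field_simp; ring
  linarith [he ▸ h]

lemma cos_eps_pos (i : ℕ) : 0 < Real.cos (eps i) := by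
  have := cos_eps_ge i
  have h2 : (1:ℝ)/(8*((i:ℝ)+1)^2) ≤ 1/8 := by
    apply div_le_div_of_nonneg_left (by norm_num) (by norm_num)
    nlinarith [sq_nonneg ((i:ℝ)+1), Nat.cast_nonneg (α := ℝ) i]
  linarith

lemma rr_ge (m : ℕ) : 3/4 ≤ rr m := by
  set a : ℕ → ℝ := fun i => 1/(8*((i:ℝ)+1)^2) with ha
  have hnn : ∀ i, 0 ≤ a i := fun i => by positivity
  have h1 : ∀ i, a i ≤ 1 := by
    intro i
    have : (1:ℝ) ≤ 8*((i:ℝ)+1)^2 := by nlinarith [Nat.cast_nonneg (α := ℝ) i]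
    rw [ha]
    simp only
    rw [div_le_one (by positivity)]
    exact this
  have hprod : ∏ i ∈ Finset.range m, (1 - a i) ≤ rr m := by
    apply Finset.prod_le_prod (fun i _ => by linarith [h1 i]) (fun i _ => cos_eps_ge i)
  have hsum : ∑ i ∈ Finset.range m, a i ≤ 1/4 := by
    have : ∑ i ∈ Finset.range m, a i = (1/8) * ∑ i ∈ Finset.range m, (1:ℝ)/((i:ℝ)+1)^2 := by
      rw [Finset.mul_sum]; exact Finset.sum_congr rfl fun i _ => by rw [ha]; simp only; field_simp
    rw [this]
    have := sum_sq_le m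
    have h2 : (0:ℝ) ≤ 2/((m:ℝ)+1) := by positivity
    nlinarith
  have := prod_one_sub_le a hnn h1 m
  linarith

lemma rr_pos (m : ℕ) : 0 < rr m := lt_of_lt_of_le (by norm_num) (rr_ge m)

/-! ### Lipschitz bounds for cos and sin -/

lemma cos_lip (a b : ℝ) : |Real.cos a - Real.cos b| ≤ |a - b| := by
  rw [Real.cos_sub_cos]
  have h1 : |Real.sin ((a+b)/2)| ≤ 1 := Real.abs_sin_le_one _
  have h2 : |Real.sin ((a-b)/2)| ≤ |(a-b)/2| := Real.abs_sin_le_abs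
  calc |(-2) * Real.sin ((a+b)/2) * Real.sin ((a-b)/2)|
      = 2 * |Real.sin ((a+b)/2)| * |Real.sin ((a-b)/2)| := by rw [abs_mul, abs_mul]; norm_num
    _ ≤ 2 * 1 * |(a-b)/2| := by
        apply mul_le_mul (mul_le_mul_of_nonneg_left h1 (by norm_num)) h2 (abs_nonneg _)
          (by norm_num)
    _ = |a - b| := by rw [abs_div]; norm_num; ring

lemma sin_lip (a b : ℝ) : |Real.sin a - Real.sin b| ≤ |a - b| := by
  rw [Real.sin_sub_sin]
  have h1 : |Real.cos ((a+b)/2)| ≤ 1 := Real.abs_cos_le_one _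
  have h2 : |Real.sin ((a-b)/2)| ≤ |(a-b)/2| := Real.abs_sin_le_abs
  calc |2 * Real.sin ((a-b)/2) * Real.cos ((a+b)/2)|
      = 2 * |Real.sin ((a-b)/2)| * |Real.cos ((a+b)/2)| := by rw [abs_mul, abs_mul]; norm_num
    _ ≤ 2 * |(a-b)/2| * 1 := by
        apply mul_le_mul (mul_le_mul_of_nonneg_left h2 (by norm_num)) h1 (abs_nonneg _)
          (by positivity)
    _ = |a - b| := by rw [abs_div]; norm_num; ring

/-! ### The "hitting" lemma : θ comes close to every angle mod 2π, eventually -/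

lemma eps_antitone : Antitone eps := by
  intro m n h
  unfold eps
  apply div_le_div_of_nonneg_left (by norm_num) (by positivity)
  have : (m:ℝ) ≤ n := Nat.cast_le.2 h
  linarith

lemma hit (α δ : ℝ) (hδ : 0 < δ) (N : ℕ) :
    ∃ m ≥ N, |Real.cos (th m) - Real.cos α| ≤ δ ∧ |Real.sin (th m) - Real.sin α| ≤ δ := by
  -- choose M ≥ N with eps m ≤ δ for all m ≥ M
  obtain ⟨n₀, hn₀⟩ := exists_nat_ge (1/(2*δ))
  set M := max N n₀ with hM
  have hMN : N ≤ M := le_max_left _ _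
  have heps : ∀ m, M ≤ m → eps m ≤ δ := by
    intro m hm
    have h1 : eps m ≤ eps n₀ := eps_antitone (le_trans (le_max_right _ _) hm)
    have h2 : eps n₀ ≤ δ := by
      unfold eps
      rw [div_le_iff₀ (by positivity)]
      have : 1/(2*δ) ≤ (n₀:ℝ) := hn₀
      calc (1:ℝ) = (1/(2*δ)) * (2*δ) := by field_simp
        _ ≤ (n₀:ℝ) * (2*δ) := by apply mul_le_mul_of_nonneg_right this (by positivity)
        _ ≤ δ * (2*((n₀:ℝ)+1)) := by nlinarith
    linarith
  -- target value A ≡ α (mod 2π) with th M ≤ A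
  set t : ℤ := ⌈(th M - α)/(2*Real.pi)⌉ with ht
  set A : ℝ := α + t * (2*Real.pi) with hA
  have hπ : (0:ℝ) < 2*Real.pi := by positivity
  have hMA : th M ≤ A := by
    have h := (div_le_iff₀ hπ).1 (Int.le_ceil ((th M - α)/(2*Real.pi)))
    rw [hA, ht]
    linarith
  have hcosA : Real.cos A = Real.cos α := Real.cos_add_int_mul_two_pi α t
  have hsinA : Real.sin A = Real.sin α := Real.sin_add_int_mul_two_pi α t
  -- least index ≥ M where th ≥ A
  have hex : ∃ j, A ≤ th (M + j) := by
    obtain ⟨m₁, hm₁⟩ := (th_tendsto.eventually_ge_atTop A).exists_forall_of_atTop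
    exact ⟨m₁, hm₁ _ (Nat.le_add_left _ _)⟩
  classical
  set k := Nat.find hex with hk
  have hkA : A ≤ th (M + k) := Nat.find_spec hex
  have hclose : |th (M + k) - A| ≤ δ := by
    rcases Nat.eq_zero_or_pos k with h0 | hpos
    · rw [h0] at hkA ⊢
      simp only [Nat.add_zero] at hkA ⊢
      rw [abs_le]
      exact ⟨by linarith, by linarith⟩
    · obtain ⟨k', hk'⟩ : ∃ k', k = k' + 1 := ⟨k - 1, (Nat.succ_pred_eq_of_pos hpos).symm⟩
      rw [hk'] at hkA ⊢
      have hnot : ¬ A ≤ th (M + k') := Nat.find_min hex (by rw [← hk, hk']; exact Nat.lt_succ_self k')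
      push_neg at hnot
      have hstep : th (M + (k' + 1)) = th (M + k') + eps (M + k') := th_succ (M + k')
      have he : eps (M + k') ≤ δ := heps _ (Nat.le_add_right _ _)
      rw [abs_le]
      exact ⟨by linarith, by linarith⟩
  refine ⟨M + k, le_trans hMN (Nat.le_add_right _ _), ?_, ?_⟩
  · calc |Real.cos (th (M+k)) - Real.cos α| = |Real.cos (th (M+k)) - Real.cos A| := by
          rw [hcosA]
      _ ≤ |th (M+k) - A| := cos_lip _ _
      _ ≤ δ := hclose
  · calc |Real.sin (th (M+k)) - Real.sin α| = |Real.sin (th (M+k)) - Real.sin A| := by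
          rw [hsinA]
      _ ≤ |th (M+k) - A| := sin_lip _ _
      _ ≤ δ := hclose

/-! ### Points on the circle -/

def pt (a b : ℝ) : Euc 2 := (WithLp.equiv 2 (Fin 2 → ℝ)).symm ![a, b]

@[simp] lemma pt_apply_0 (a b : ℝ) : pt a b 0 = a := rfl
@[simp] lemma pt_apply_1 (a b : ℝ) : pt a b 1 = b := rfl

lemma pt_norm (a b : ℝ) : ‖pt a b‖ = Real.sqrt (a^2 + b^2) := by
  rw [EuclideanSpace.norm_eq]
  simp [Fin.sum_univ_two, sq_abs]

lemma pt_sub (a b c d : ℝ) : pt a b - pt c d = pt (a-c) (b-d) := by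
  ext i
  fin_cases i <;> simp [pt]

lemma pt_smul (r a b : ℝ) : r • pt a b = pt (r*a) (r*b) := by
  ext i
  fin_cases i <;> simp [pt]

def dir (γ : ℝ) : Euc 2 := pt (Real.cos γ) (Real.sin γ)

lemma dir_norm (γ : ℝ) : ‖dir γ‖ = 1 := by
  rw [dir, pt_norm]
  rw [show Real.cos γ ^2 + Real.sin γ ^2 = 1 from by rw [add_comm]; exact Real.sin_sq_add_cos_sq γ]
  exact Real.sqrt_one

lemma dir_ne_zero (γ : ℝ) : dir γ ≠ 0 := by
  intro h
  have := dir_norm γ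
  rw [h] at this
  simp at this

lemma inner_pt (a b c d : ℝ) : (inner ℝ (pt a b) (pt c d) : ℝ) = a*c + b*d := by
  rw [PiLp.inner_apply]
  simp [Fin.sum_univ_two, RCLike.inner_apply, pt]
  ring

lemma inner_dir (γ δ : ℝ) : (inner ℝ (dir γ) (dir δ) : ℝ) = Real.cos (δ - γ) := by
  rw [dir, dir, inner_pt, Real.cos_sub]
  ring

/-! ### Lines and balls -/

lemma span_ne_bot (γ : ℝ) : (ℝ ∙ dir γ) ≠ ⊥ := by
  simpa [Submodule.span_singleton_eq_bot] using dir_ne_zero γ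

lemma span_ne_top (γ : ℝ) : (ℝ ∙ dir γ) ≠ ⊤ := by
  intro h
  have h1 : Module.finrank ℝ (ℝ ∙ dir γ) = 1 := finrank_span_singleton (dir_ne_zero γ)
  rw [h, finrank_top, finrank_euclideanSpace_fin] at h1
  norm_num at h1

lemma ball_symm {p : Euc 2} (H : Submodule ℝ (Euc 2)) (hp : p ∈ H) (r : ℝ) :
    reflMap H '' closedBall p r = closedBall p r := by
  rw [reflMap, LinearIsometryEquiv.image_closedBall, Submodule.reflection_mem_subspace_eq_self hp]

lemma ball_body (p : Euc 2) : IsConvexBody (closedBall p 1) :=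
  ⟨⟨p, mem_closedBall_self zero_le_one⟩, isCompact_closedBall _ _, convex_closedBall _ _⟩

lemma cball_add_singleton (p x : Euc 2) (r : ℝ) :
    closedBall p r + {x} = closedBall (p + x) r := by
  rw [add_comm, singleton_add_closedBall, add_comm]

lemma mem_orth (γ δ r : ℝ) :
    r • dir γ - (r * Real.cos (γ - δ)) • dir δ ∈ (ℝ ∙ dir δ)ᗮ := by
  rw [Submodule.mem_orthogonal_singleton_iff_inner_right]
  rw [inner_sub_right, real_inner_smul_right, real_inner_smul_right, inner_dir,
    real_inner_self_eq_norm_sq, dir_norm]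
  ring

/-! ### The symmetrization step -/

lemma step {D : Submodule ℝ (Euc 2) → Set (Euc 2) → Set (Euc 2)} (hD : IsInF D)
    (γ δ r : ℝ) :
    D (ℝ ∙ dir δ) (closedBall (r • dir γ) 1)
      = closedBall ((r * Real.cos (γ - δ)) • dir δ) 1 := by
  set p := (r * Real.cos (γ - δ)) • dir δ with hpdef
  have hp : p ∈ ℝ ∙ dir δ := Submodule.mem_span_singleton.2 ⟨_, rfl⟩
  have hx : r • dir γ - p ∈ (ℝ ∙ dir δ)ᗮ := mem_orth γ δ r
  have h := hD.transInv (span_ne_bot δ) (span_ne_top δ) (ball_body p)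
    (ball_symm _ hp 1) _ hx
  rw [cball_add_singleton] at h
  rw [show p + (r • dir γ - p) = r • dir γ by abel] at h
  exact h

def cc (m : ℕ) : Euc 2 := rr m • dir (th m)

lemma iter_eq {D : Submodule ℝ (Euc 2) → Set (Euc 2) → Set (Euc 2)} (hD : IsInF D) (j : ℕ) :
    iterSeq (fun m => D (ℝ ∙ dir (th m))) 0 (closedBall (cc 0) 1) j = closedBall (cc j) 1 := by
  induction j with
  | zero =>
    show D (ℝ ∙ dir (th 0)) (closedBall (cc 0) 1) = closedBall (cc 0) 1
    apply hD.inv (span_ne_bot _) (span_ne_top _) (ball_body _)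
    apply ball_symm
    exact Submodule.mem_span_singleton.2 ⟨_, rfl⟩
  | succ n ih =>
    show D (ℝ ∙ dir (th (0 + n + 1))) (iterSeq _ 0 _ n) = _
    rw [ih]
    have h0 : 0 + n + 1 = n + 1 := by omega
    rw [h0, cc, step hD (th n) (th (n+1)) (rr n)]
    have : rr n * Real.cos (th n - th (n+1)) = rr (n+1) := by
      rw [th_succ, rr_succ]
      rw [show th n - (th n + eps n) = -(eps n) by ring, Real.cos_neg]
    rw [this, cc]

/-! ### Hausdorff distance between balls dominates distance of centers -/

lemma dist_le_hausdorff (a b : Euc 2) :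
    dist a b ≤ Metric.hausdorffDist (closedBall a 1) (closedBall b 1) := by
  rcases eq_or_ne a b with rfl | hne
  · simp [Metric.hausdorffDist_nonneg]
  · set d := dist a b with hd
    have hdpos : 0 < d := dist_pos.2 hne
    set u : Euc 2 := d⁻¹ • (a - b) with hu
    have hun : ‖u‖ = 1 := by
      rw [hu, norm_smul, norm_inv, Real.norm_eq_abs, abs_of_pos hdpos, ← dist_eq_norm, ← hd]
      field_simp
    set x : Euc 2 := a + u with hx
    have hxa : x ∈ closedBall a 1 := by
      rw [mem_closedBall, hx, dist_self_add_left, hun]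
    have hxb : dist x b = d + 1 := by
      rw [hx, dist_eq_norm, show a + u - b = (a - b) + u by abel, hu,
        show (a - b) + d⁻¹ • (a - b) = (1 + d⁻¹) • (a - b) by rw [add_smul, one_smul],
        norm_smul, Real.norm_eq_abs, abs_of_pos (by positivity), ← dist_eq_norm, ← hd]
      field_simp
    have hinf : d ≤ Metric.infDist x (closedBall b 1) := by
      by_contra hlt
      push_neg at hlt
      obtain ⟨y, hy, hxy⟩ := (Metric.infDist_lt_iff ⟨b, mem_closedBall_self zero_le_one⟩).1 hlt
      have h1 : dist x b ≤ dist x y + dist y b := dist_triangle _ _ _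
      rw [mem_closedBall] at hy
      rw [hxb] at h1
      linarith
    have hfin : EMetric.hausdorffEdist (closedBall a 1) (closedBall b 1) ≠ ⊤ :=
      Metric.hausdorffEdist_ne_top_of_nonempty_of_bounded
        ⟨a, mem_closedBall_self zero_le_one⟩ ⟨b, mem_closedBall_self zero_le_one⟩
        Metric.isBounded_closedBall Metric.isBounded_closedBall
    calc d ≤ Metric.infDist x (closedBall b 1) := hinf
      _ ≤ Metric.hausdorffDist (closedBall a 1) (closedBall b 1) :=
          Metric.infDist_le_hausdorffDist_of_mem hxa hfin

/-! ### The centers do not form a Cauchy sequence -/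

lemma centers_far (N : ℕ) : ∃ j ≥ N, ∃ k ≥ N, 1 ≤ dist (cc j) (cc k) := by
  obtain ⟨j, hjN, hjc, _⟩ := hit 0 (1/10) (by norm_num) N
  obtain ⟨k, hkN, hkc, _⟩ := hit Real.pi (1/10) (by norm_num) N
  rw [Real.cos_zero] at hjc
  rw [Real.cos_pi] at hkc
  refine ⟨j, hjN, k, hkN, ?_⟩
  have hcj : 9/10 ≤ Real.cos (th j) := by
    rcases abs_le.1 hjc with ⟨h1, _⟩; linarith
  have hck : Real.cos (th k) ≤ -(9/10) := by
    rcases abs_le.1 hkc with ⟨_, h2⟩; linarith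
  have hnorm : dist (cc j) (cc k) = ‖pt (rr j * Real.cos (th j) - rr k * Real.cos (th k))
      (rr j * Real.sin (th j) - rr k * Real.sin (th k))‖ := by
    rw [dist_eq_norm, cc, cc, dir, dir, pt_smul, pt_smul, pt_sub]
  set c1 := rr j * Real.cos (th j) - rr k * Real.cos (th k) with hc1
  set c2 := rr j * Real.sin (th j) - rr k * Real.sin (th k) with hc2
  have habs : |c1| ≤ ‖pt c1 c2‖ := by
    rw [pt_norm]
    rw [← Real.sqrt_sq_eq_abs]
    apply Real.sqrt_le_sqrt
    nlinarith [sq_nonneg c2]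
  have hbig : 1 ≤ c1 := by
    have h1 : rr j * Real.cos (th j) ≥ rr j * (9/10) :=
      mul_le_mul_of_nonneg_left hcj (rr_pos j).le
    have h2 : rr k * Real.cos (th k) ≤ rr k * (-(9/10)) :=
      mul_le_mul_of_nonneg_left hck (rr_pos k).le
    have h3 := rr_ge j
    have h4 := rr_ge k
    rw [hc1]
    nlinarith
  rw [hnorm]
  calc (1:ℝ) ≤ c1 := hbig
    _ ≤ |c1| := le_abs_self _
    _ ≤ _ := habs

end Stmt18Aux

/-- For every symmetrization `D ∈ ℱ` on `𝒦²` there are a sequence of lines through the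
origin (spanned by unit vectors `v_m`) whose unit direction vectors are dense in `S¹`, and a
convex body `K` with nonempty interior, such that the sequence
`(D_{U_m} ∘ ⋯ ∘ D_{U_1}) K`, with `U_m = span v_m`, does not converge in the Hausdorff
metric. -/
theorem stmt18 (D : Submodule ℝ (Euc 2) → Set (Euc 2) → Set (Euc 2)) (hD : IsInF D) :
    ∃ v : ℕ → Euc 2, (∀ m, ‖v m‖ = 1) ∧
      sphere (0 : Euc 2) 1 ⊆ closure {x : Euc 2 | ∃ m, x = v m ∨ x = -v m} ∧
      ∃ K : Set (Euc 2), IsConvexBody K ∧ (interior K).Nonempty ∧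
        ¬ ∃ L : Set (Euc 2), L.Nonempty ∧ IsCompact L ∧
          Tendsto (fun j => hausdorffDist (iterSeq (fun m => D (ℝ ∙ v m)) 0 K j) L)
            atTop (𝓝 0) := by
  classical
  open Stmt18Aux in
  refine ⟨fun m => dir (th m), fun m => dir_norm _, ?_, ?_⟩
  · -- density in the circle
    intro x hx
    rw [Metric.mem_closure_iff]
    intro ε hε
    have hx1 : ‖x‖ = 1 := by simpa using hx
    have hsq : (x 0)^2 + (x 1)^2 = 1 := by
      have h := congrArg (· ^ 2) hx1
      rw [EuclideanSpace.norm_eq, Fin.sum_univ_two] at h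
      simp only [one_pow] at h
      rw [Real.sq_sqrt (by positivity)] at h
      simpa [sq_abs] using h
    have hb : -1 ≤ x 0 ∧ x 0 ≤ 1 := by
      apply abs_le.1
      rw [← Real.sqrt_one, ← Real.sqrt_sq_eq_abs]
      exact Real.sqrt_le_sqrt (by nlinarith [sq_nonneg (x 1)])
    obtain ⟨α, hcos, hsin⟩ : ∃ α, Real.cos α = x 0 ∧ Real.sin α = x 1 := by
      rcases le_or_gt 0 (x 1) with h1 | h1
      · refine ⟨Real.arccos (x 0), Real.cos_arccos hb.1 hb.2, ?_⟩
        rw [Real.sin_arccos]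
        rw [show 1 - (x 0)^2 = (x 1)^2 by linarith]
        rw [Real.sqrt_sq_eq_abs]
        exact abs_of_nonneg h1
      · refine ⟨-Real.arccos (x 0), by rw [Real.cos_neg]; exact Real.cos_arccos hb.1 hb.2, ?_⟩
        rw [Real.sin_neg, Real.sin_arccos]
        rw [show 1 - (x 0)^2 = (x 1)^2 by linarith]
        rw [Real.sqrt_sq_eq_abs, abs_of_neg h1]
        ring
    obtain ⟨m, _, hc, hs⟩ := hit α (ε/3) (by positivity) 0
    refine ⟨dir (th m), ⟨m, Or.inl rfl⟩, ?_⟩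
    have hxd : x = pt (x 0) (x 1) := by
      ext i
      fin_cases i <;> rfl
    rw [hxd, dir, dist_eq_norm, pt_sub, pt_norm]
    have h1 : (x 0 - Real.cos (th m))^2 ≤ (ε/3)^2 := by
      rw [← sq_abs]
      apply pow_le_pow_left₀ (abs_nonneg _) _ 2
      rw [← hcos, abs_sub_comm]
      exact hc
    have h2 : (x 1 - Real.sin (th m))^2 ≤ (ε/3)^2 := by
      rw [← sq_abs]
      apply pow_le_pow_left₀ (abs_nonneg _) _ 2
      rw [← hsin, abs_sub_comm]
      exact hs
    calc Real.sqrt ((x 0 - Real.cos (th m))^2 + (x 1 - Real.sin (th m))^2)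
        ≤ Real.sqrt ((ε/3)^2 + (ε/3)^2) := Real.sqrt_le_sqrt (by linarith)
      _ < ε := (Real.sqrt_lt' hε).2 (by nlinarith)
  · -- the sequence of bodies does not converge
    refine ⟨closedBall (cc 0) 1, ball_body _, ?_, ?_⟩
    · rw [interior_closedBall _ one_ne_zero]
      exact ⟨_, mem_ball_self one_pos⟩
    · rintro ⟨L, hLne, hLc, hconv⟩
      obtain ⟨N, hN⟩ := (Metric.tendsto_atTop.1 hconv) (1/2) (by norm_num)
      have hlt : ∀ j ≥ N,
          Metric.hausdorffDist (closedBall (cc j) 1) L < 1/2 := by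
        intro j hj
        have := hN j hj
        rw [iter_eq hD j] at this
        rw [Real.dist_eq, sub_zero] at this
        exact lt_of_le_of_lt (le_abs_self _) this
      obtain ⟨j, hj, k, hk, hfar⟩ := centers_far N
      have hfinj : EMetric.hausdorffEdist (closedBall (cc j) 1) L ≠ ⊤ :=
        Metric.hausdorffEdist_ne_top_of_nonempty_of_bounded
          ⟨_, mem_closedBall_self zero_le_one⟩ hLne Metric.isBounded_closedBall
          hLc.isBounded
      have htri := Metric.hausdorffDist_triangle (t := L) (u := closedBall (cc k) 1) hfinj
      have hcomm : Metric.hausdorffDist L (closedBall (cc k) 1)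
          = Metric.hausdorffDist (closedBall (cc k) 1) L := Metric.hausdorffDist_comm
      have hd := dist_le_hausdorff (cc j) (cc k)
      have h1 := hlt j hj
      have h2 := hlt k hk
      rw [hcomm] at htri
      linarith
end
end
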